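/- The radical of the cocycle consists exactly of the constants: for f in LaurentSeries ℂ, one has Res(g * D f) = 0 for every g in LaurentSeries ℂ if and only if f.coeff n = 0 for all n ≠ 0. Hence the antisymmetric form c(f,g) = Res(g * D f) descends to a nondegenerate form on LaurentSeries ℂ modulo constants. -/

import Mathlib

open HahnSeries

/-- The formal derivative of Laurent series, defined coefficientwise by
`(D f).coeff n = (n + 1) • f.coeff (n + 1)`. -/
noncomputable def D : LaurentSeries ℂ →ₗ[ℂ] LaurentSeries ℂ where
  toFun f :=
    { coeff := fun n => (n + 1) • f.coeff (n + 1)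
      isPWO_support' := by
        have hmono : MonotoneOn (fun n : ℤ => n - 1) f.support := by
          intro a _ b _ h
          simpa using sub_le_sub_right h 1
        refine Set.IsPWO.mono (f.isPWO_support.image_of_monotoneOn hmono) ?_
        intro n hn
        have hf : f.coeff (n + 1) ≠ 0 := by
          intro h
          simp [h] at hn
        exact ⟨n + 1, hf, by ring⟩ }
  map_add' f g := by
    ext n
    simp [smul_add]
  map_smul' c f := by
    ext n
    simp
    ring

/-- The residue of a formal Laurent series: the coefficient of `z⁻¹`. -/
noncomputable def Res (f : LaurentSeries ℂ) : ℂ := f.coeff (-1)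

lemma D_coeff (f : LaurentSeries ℂ) (n : ℤ) :
    (D f).coeff n = (n + 1) • f.coeff (n + 1) := rfl

theorem cocycle_radical_eq_constants (f : LaurentSeries ℂ) :
    (∀ g : LaurentSeries ℂ, Res (g * D f) = 0) ↔ ∀ n ≠ 0, f.coeff n = 0 := by
  constructor
  · intro h n hn
    have hh := h (single (-n) 1)
    have hcoef : (single (-n) (1 : ℂ) * D f).coeff (n - 1 + -n) = 1 * (D f).coeff (n - 1) :=
      coeff_single_mul_add (r := (1 : ℂ)) (x := D f) (a := n - 1) (b := -n)
    have h1 : (n - 1 + -n) = (-1 : ℤ) := by ring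
    rw [h1] at hcoef
    rw [Res, hcoef, one_mul, D_coeff] at hh
    have h2 : (n - 1 + 1) = n := by ring
    rw [h2] at hh
    rcases smul_eq_zero.mp hh with h3 | h3
    · exact absurd h3 hn
    · exact h3
  · intro h g
    have hD : D f = 0 := by
      ext n
      rw [D_coeff]
      rcases eq_or_ne (n + 1) 0 with h1 | h1
      · rw [h1]; simp
      · rw [h (n + 1) h1]; simp
    rw [hD, mul_zero, Res]
    simp
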